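/- Let H' be a (1+ε, β', t)-bounded-distance hopset for G: for every pair u,v with d_G(u,v) ≤ t, d_G(u,v) ≤ d_{G∪H'}^{(β')}(u,v) ≤ (1+ε)·d_G(u,v), and all hopset edges have weight at least the corresponding graph distance. Let A^{(1)} be the S×V adjacency rows of G∪H' and A^{(s+1)} a (1+1/R)-approximation of A^{(s)} ⋆ B where B is the adjacency matrix of G∪H'. Then for every i ∈ S, j ∈ V with d_G(i,j) ≤ t, A^{(β')}_{ij} is a (1+ε)(1+1/R)^{β'-1}-approximation of d_G(i,j). -/

import Mathlib

open scoped ENNReal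

/-- `hopDist w t u v` is the minimum weight of a directed `u → v` walk with at
most `t` edges, where `w` is the (extended-real-valued) adjacency matrix. -/
noncomputable def hopDist {V : Type*} [Fintype V] [DecidableEq V]
    (w : V → V → ℝ≥0∞) : ℕ → V → V → ℝ≥0∞
  | 0 => fun u v => if u = v then 0 else ⊤
  | t + 1 => fun u v => min (hopDist w t u v) (⨅ k, hopDist w t u k + w k v)

/-- The (unbounded) graph distance induced by adjacency matrix `w`. -/
noncomputable def gDist {V : Type*} [Fintype V] [DecidableEq V]
    (w : V → V → ℝ≥0∞) (u v : V) : ℝ≥0∞ :=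
  ⨅ t : ℕ, hopDist w t u v

/-- the bounded-distance hopset analogue of the iterated
approximate distance product: for every source-vertex pair at distance at most
`t`, after `β' - 1` approximate products the entry is a
`(1+ε)(1+1/R)^(β'-1)`-approximation of the true distance. -/
theorem stmt_13 {V S : Type*} [Fintype V] [DecidableEq V] [Nonempty V]
    (wG wH : V → V → ℝ≥0∞) (hGdiag : ∀ v, wG v v = 0)
    (hHge : ∀ u v, gDist wG u v ≤ wH u v)
    (ε t : ℝ≥0∞) (β' : ℕ) (hβ' : 1 ≤ β')
    (hhopset : ∀ u v, gDist wG u v ≤ t →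
      gDist wG u v ≤ hopDist (fun a b => min (wG a b) (wH a b)) β' u v ∧
        hopDist (fun a b => min (wG a b) (wH a b)) β' u v ≤ (1 + ε) * gDist wG u v)
    (f : S → V) (R : ℝ≥0∞) (hR : 1 ≤ R)
    (A : ℕ → S → V → ℝ≥0∞)
    (hA1 : ∀ i j, A 1 i j = min (wG (f i) j) (wH (f i) j))
    (hAstep : ∀ s, 1 ≤ s → ∀ i j,
      (⨅ k, A s i k + min (wG k j) (wH k j)) ≤ A (s + 1) i j ∧
        A (s + 1) i j ≤ (1 + 1 / R) * ⨅ k, A s i k + min (wG k j) (wH k j)) :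
    ∀ i j, gDist wG (f i) j ≤ t →
      gDist wG (f i) j ≤ A β' i j ∧
        A β' i j ≤ (1 + ε) * (1 + 1 / R) ^ (β' - 1) * gDist wG (f i) j := by
  set w : V → V → ℝ≥0∞ := fun a b => min (wG a b) (wH a b) with hw
  have hdiag : ∀ v, w v v = 0 := fun v => by
    simp [hw, hGdiag v]
  -- collapse of the inner infimum at one hop
  have hinf0 : ∀ u v, (⨅ k, hopDist w 0 u k + w k v) = w u v := by
    intro u v
    apply le_antisymm
    · exact (iInf_le _ u).trans (by simp [hopDist])
    · refine le_iInf fun k => ?_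
      by_cases h : u = k
      · subst h; simp [hopDist]
      · simp [hopDist, h]
  have hop1 : ∀ u v, hopDist w 1 u v = w u v := by
    intro u v
    show min (hopDist w 0 u v) (⨅ k, hopDist w 0 u k + w k v) = w u v
    rw [hinf0]
    by_cases h : u = v
    · subst h; simp [hopDist, hdiag]
    · simp [hopDist, h]
  have hop_succ : ∀ s u v, hopDist w (s + 1) u v = ⨅ k, hopDist w s u k + w k v := by
    intro s u v
    show min (hopDist w s u v) (⨅ k, hopDist w s u k + w k v) = _
    refine min_eq_right ((iInf_le _ v).trans ?_)
    simp [hdiag]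
  have hRfin : (1 + 1 / R : ℝ≥0∞) ≠ ⊤ := by
    have : (1 / R : ℝ≥0∞) ≤ 1 := by
      rw [one_div]; exact ENNReal.inv_le_one.mpr hR
    intro h
    have : (⊤ : ℝ≥0∞) ≤ 1 + 1 := by rw [← h]; exact add_le_add le_rfl this
    simp at this
  -- main induction
  have key : ∀ s i j, hopDist w (s + 1) (f i) j ≤ A (s + 1) i j ∧
      A (s + 1) i j ≤ (1 + 1 / R) ^ s * hopDist w (s + 1) (f i) j := by
    intro s
    induction s with
    | zero => intro i j; rw [hop1, hA1]; simp [hw]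
    | succ s ih =>
      intro i j
      obtain ⟨h1, h2⟩ := hAstep (s + 1) (by omega) i j
      constructor
      · refine le_trans ?_ h1
        rw [hop_succ]
        exact iInf_mono fun k => add_le_add_left (ih i k).1 _
      · refine h2.trans ?_
        have hstep : (⨅ k, A (s + 1) i k + w k j) ≤
            (1 + 1 / R) ^ s * hopDist w (s + 2) (f i) j := by
          rw [hop_succ, ENNReal.mul_iInf_of_ne (pow_ne_zero _ (by simp)) (ENNReal.pow_ne_top hRfin)]
          refine iInf_mono fun k => ?_
          rw [mul_add]
          refine add_le_add (ih i k).2 ?_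
          calc w k j = 1 * w k j := (one_mul _).symm
            _ ≤ (1 + 1 / R) ^ s * w k j :=
              mul_le_mul_left (one_le_pow₀ (le_add_right le_rfl)) _
        calc (1 + 1 / R) * ⨅ k, A (s + 1) i k + w k j
            ≤ (1 + 1 / R) * ((1 + 1 / R) ^ s * hopDist w (s + 2) (f i) j) :=
              mul_le_mul_right hstep _
          _ = (1 + 1 / R) ^ (s + 1) * hopDist w (s + 2) (f i) j := by ring
  intro i j hdist
  obtain ⟨hlo, hhi⟩ := hhopset (f i) j hdist
  obtain ⟨s, rfl⟩ : ∃ s, β' = s + 1 := ⟨β' - 1, by omega⟩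
  obtain ⟨k1, k2⟩ := key s i j
  refine ⟨hlo.trans k1, k2.trans ?_⟩
  calc (1 + 1 / R) ^ s * hopDist w (s + 1) (f i) j
      ≤ (1 + 1 / R) ^ s * ((1 + ε) * gDist wG (f i) j) := mul_le_mul_right hhi _
    _ = (1 + ε) * (1 + 1 / R) ^ (s + 1 - 1) * gDist wG (f i) j := by
        simp only [Nat.add_sub_cancel]; ring
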